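/- There exists a super-simple (5,2)-DGDD of group type 4⁶ (six groups each of size 4, so 24 points) with d ≥ 1/2. -/

import Mathlib

set_option maxRecDepth 100000

/-- A block collection is super-simple if any two of its blocks (counted with
multiplicity) share at most two points. -/
def SuperSimple (v : ℕ) (B : Multiset (List (Fin v))) : Prop :=
  ∀ b₁ b₂ : List (Fin v), ({b₁, b₂} : Multiset (List (Fin v))) ≤ B →
    (b₁.toFinset ∩ b₂.toFinset).card ≤ 2

/-- `(Fin v, G, B)` is a `(k,λ)` directed group divisible design (DGDD):
`G` partitions the point set into groups, every block is an ordered `k`-tuple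
of distinct points meeting each group in at most one point, and every ordered
pair of points from distinct groups appears (in order) in exactly `lam` blocks. -/
def IsDGDD (v k lam : ℕ) (G : Finset (Finset (Fin v)))
    (B : Multiset (List (Fin v))) : Prop :=
  (∀ x : Fin v, ∃! g, g ∈ G ∧ x ∈ g) ∧
  (∀ b ∈ B, b.length = k ∧ b.Nodup ∧
    ∀ g ∈ G, ∀ x ∈ b, ∀ y ∈ b, x ∈ g → y ∈ g → x = y) ∧
  ∀ x y : Fin v, (∀ g ∈ G, ¬(x ∈ g ∧ y ∈ g)) →
    Multiset.countP (fun b => [x, y].Sublist b) B = lam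

/-- `S` is a defining set of the `(k,λ)`-DGDD `(Fin v, G, B)`: it is a
subcollection of `B`, and `B` is the unique `(k,λ)`-DGDD with the same point
set and group set whose block collection contains `S`. -/
def IsDGDDDefiningSet (v k lam : ℕ) (G : Finset (Finset (Fin v)))
    (B S : Multiset (List (Fin v))) : Prop :=
  S ≤ B ∧ ∀ B' : Multiset (List (Fin v)),
    IsDGDD v k lam G B' → S ≤ B' → B' = B

/-- `d ≥ 1/2` for a DGDD: every defining set (in particular a smallest one)
contains at least half of the blocks. -/
def DGDDDefiningSetsAtLeastHalf (v k lam : ℕ) (G : Finset (Finset (Fin v)))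
    (B : Multiset (List (Fin v))) : Prop :=
  ∀ S : Multiset (List (Fin v)), IsDGDDDefiningSet v k lam G B S →
    Multiset.card B ≤ 2 * Multiset.card S

/-- There exists a super-simple `(k,λ)`-DGDD whose group type (the multiset of
group sizes) is `T`, with `d ≥ 1/2`. -/
def ExistsSuperSimpleDGDDHalf (k lam : ℕ) (T : Multiset ℕ) : Prop :=
  ∃ (v : ℕ) (G : Finset (Finset (Fin v))) (B : Multiset (List (Fin v))),
    IsDGDD v k lam G B ∧ SuperSimple v B ∧
    Multiset.map Finset.card G.val = T ∧
    DGDDDefiningSetsAtLeastHalf v k lam G B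

/-! ### Auxiliary sublist lemmas and the swapping trade -/


lemma pair_sublist_cons {α : Type*} (p q a : α) (l : List α) :
    [p,q].Sublist (a :: l) ↔ (p = a ∧ q ∈ l) ∨ [p,q].Sublist l := by
  constructor
  · intro h
    cases h with
    | cons _ h => exact Or.inr h
    | cons_cons _ h => exact Or.inl ⟨rfl, List.singleton_sublist.mp h⟩
  · rintro (⟨rfl, hq⟩ | h)
    · exact (List.singleton_sublist.mpr hq).cons₂ p
    · exact h.cons a

lemma pair_sublist_cons₂ {α : Type*} (p q a b : α) (l : List α) :
    [p,q].Sublist (a :: b :: l) ↔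
      (p = a ∧ q = b) ∨ ((p = a ∨ p = b) ∧ q ∈ l) ∨ [p,q].Sublist l := by
  rw [pair_sublist_cons, pair_sublist_cons]
  simp only [List.mem_cons]
  tauto

lemma swap_count {α : Type*} [DecidableEq α] (x y p q : α) (t s : List α)
    (hb : (x :: y :: t).Nodup) (hc : (y :: x :: s).Nodup) :
    ((if [p,q].Sublist (y :: x :: t) then 1 else 0)
      + (if [p,q].Sublist (x :: y :: s) then 1 else 0) : ℕ)
      = (if [p,q].Sublist (x :: y :: t) then 1 else 0)
      + (if [p,q].Sublist (y :: x :: s) then 1 else 0) := by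
  simp only [List.nodup_cons, List.mem_cons, not_or] at hb hc
  obtain ⟨⟨hxy, hxt⟩, hyt, -⟩ := hb
  obtain ⟨⟨hyx, hys⟩, hxs, -⟩ := hc
  have key : ∀ l : List α, [p,q].Sublist l → q ∈ l := by
    intro l h; exact h.subset (by simp)
  by_cases h1 : p = x ∧ q = y
  · obtain ⟨rfl, rfl⟩ := h1
    have A : [p,q].Sublist (p :: q :: t) := (pair_sublist_cons₂ p q p q t).mpr (Or.inl ⟨rfl, rfl⟩)
    have A' : [p,q].Sublist (p :: q :: s) := (pair_sublist_cons₂ p q p q s).mpr (Or.inl ⟨rfl, rfl⟩)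
    have B : ¬ [p,q].Sublist (q :: p :: t) := by
      rw [pair_sublist_cons₂]
      rintro (⟨h, -⟩ | ⟨-, h⟩ | h)
      · exact hxy h
      · exact hyt h
      · exact hyt (key _ h)
    have B' : ¬ [p,q].Sublist (q :: p :: s) := by
      rw [pair_sublist_cons₂]
      rintro (⟨h, -⟩ | ⟨-, h⟩ | h)
      · exact hxy h
      · exact hys h
      · exact hys (key _ h)
    simp [A, A', B, B']
  · by_cases h2 : p = y ∧ q = x
    · obtain ⟨rfl, rfl⟩ := h2
      have A : [p,q].Sublist (p :: q :: t) := (pair_sublist_cons₂ p q p q t).mpr (Or.inl ⟨rfl, rfl⟩)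
      have A' : [p,q].Sublist (p :: q :: s) := (pair_sublist_cons₂ p q p q s).mpr (Or.inl ⟨rfl, rfl⟩)
      have B : ¬ [p,q].Sublist (q :: p :: t) := by
        rw [pair_sublist_cons₂]
        rintro (⟨h, -⟩ | ⟨-, h⟩ | h)
        · exact hyx h
        · exact hxt h
        · exact hxt (key _ h)
      have B' : ¬ [p,q].Sublist (q :: p :: s) := by
        rw [pair_sublist_cons₂]
        rintro (⟨h, -⟩ | ⟨-, h⟩ | h)
        · exact hyx h
        · exact hxs h
        · exact hxs (key _ h)
      simp [A, A', B, B']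
    · have e1 : ([p,q].Sublist (y :: x :: t)) ↔ ([p,q].Sublist (x :: y :: t)) := by
        rw [pair_sublist_cons₂, pair_sublist_cons₂]
        constructor
        · rintro (h | ⟨h, h'⟩ | h)
          · exact absurd h h2
          · exact Or.inr (Or.inl ⟨Or.symm h, h'⟩)
          · exact Or.inr (Or.inr h)
        · rintro (h | ⟨h, h'⟩ | h)
          · exact absurd h h1
          · exact Or.inr (Or.inl ⟨Or.symm h, h'⟩)
          · exact Or.inr (Or.inr h)
      have e2 : ([p,q].Sublist (x :: y :: s)) ↔ ([p,q].Sublist (y :: x :: s)) := by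
        rw [pair_sublist_cons₂, pair_sublist_cons₂]
        constructor
        · rintro (h | ⟨h, h'⟩ | h)
          · exact absurd h h1
          · exact Or.inr (Or.inl ⟨Or.symm h, h'⟩)
          · exact Or.inr (Or.inr h)
        · rintro (h | ⟨h, h'⟩ | h)
          · exact absurd h h2
          · exact Or.inr (Or.inl ⟨Or.symm h, h'⟩)
          · exact Or.inr (Or.inr h)
      simp only [e1, e2]


/-! ### The groups -/

def gset (j : Fin 6) : Finset (Fin 24) := Finset.univ.filter (fun x => x.val % 6 = j.val)

theorem gset_mem (x : Fin 24) (j : Fin 6) : x ∈ gset j ↔ x.val % 6 = j.val := by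
  simp [gset]

theorem gset_inj : Function.Injective gset := by
  intro j k h
  have hj : (⟨j.val, by omega⟩ : Fin 24) ∈ gset j := by
    rw [gset_mem]; simp [Nat.mod_eq_of_lt j.isLt]
  rw [h, gset_mem] at hj
  simp only [Nat.mod_eq_of_lt (by omega : (j.val : ℕ) < 6)] at hj
  exact Fin.ext hj

def Gs : Finset (Finset (Fin 24)) := Finset.univ.map ⟨gset, gset_inj⟩

theorem gs_mem_iff (g : Finset (Fin 24)) : g ∈ Gs ↔ ∃ j, gset j = g := by
  simp [Gs]

theorem gcard : Multiset.map Finset.card Gs.val = Multiset.replicate 6 4 := by decide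

/-! ### The blocks -/

def blocksL : List (List (Fin 24)) := [[0,11,20,10,13], [11,0,3,4,8], [1,12,21,11,14], [12,1,4,5,9], [2,13,22,12,15], [13,2,5,6,10], [3,14,23,13,16], [14,3,6,7,11], [4,15,0,14,17], [15,4,7,8,12], [5,16,1,15,18], [16,5,8,9,13], [6,17,2,16,19], [17,6,9,10,14], [7,18,3,17,20], [18,7,10,11,15], [8,19,4,18,21], [19,8,11,12,16], [9,20,5,19,22], [20,9,12,13,17], [10,21,6,20,23], [21,10,13,14,18], [11,22,7,21,0], [22,11,14,15,19], [12,23,8,22,1], [23,12,15,16,20], [13,0,9,23,2], [0,13,16,17,21], [14,1,10,0,3], [1,14,17,18,22], [15,2,11,1,4], [2,15,18,19,23], [16,3,12,2,5], [3,16,19,20,0], [17,4,13,3,6], [4,17,20,21,1], [18,5,14,4,7], [5,18,21,22,2], [19,6,15,5,8], [6,19,22,23,3], [20,7,16,6,9], [7,20,23,0,4], [21,8,17,7,10], [8,21,0,1,5], [22,9,18,8,11], [9,22,1,2,6], [23,10,19,9,12], [10,23,2,3,7], [0,1,20,15,22], [1,0,11,9,16], [1,2,21,16,23], [2,1,12,10,17],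 [2,3,22,17,0], [3,2,13,11,18], [3,4,23,18,1], [4,3,14,12,19], [4,5,0,19,2], [5,4,15,13,20], [5,6,1,20,3], [6,5,16,14,21], [6,7,2,21,4], [7,6,17,15,22], [7,8,3,22,5], [8,7,18,16,23], [8,9,4,23,6], [9,8,19,17,0], [9,10,5,0,7], [10,9,20,18,1], [10,11,6,1,8], [11,10,21,19,2], [11,12,7,2,9], [12,11,22,20,3], [12,13,8,3,10], [13,12,23,21,4], [13,14,9,4,11], [14,13,0,22,5], [14,15,10,5,12], [15,14,1,23,6], [15,16,11,6,13], [16,15,2,0,7], [16,17,12,7,14], [17,16,3,1,8], [17,18,13,8,15], [18,17,4,2,9], [18,19,14,9,16], [19,18,5,3,10], [19,20,15,10,17], [20,19,6,4,11], [20,21,16,11,18], [21,20,7,5,12], [21,22,17,12,19], [22,21,8,6,13], [22,23,18,13,20], [23,22,9,7,14], [23,0,19,14,21], [0,23,10,8,15]]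

/-- fast sublist test for two-element lists -/
def sub2 (x y : Fin 24) : List (Fin 24) → Bool
  | [] => false
  | a :: l => if a = x then y ∈ l else sub2 x y l

theorem sub2_iff (x y : Fin 24) (l : List (Fin 24)) :
    sub2 x y l = true ↔ [x,y].Sublist l := by
  induction l with
  | nil => simp [sub2]
  | cons a l ih =>
    rw [pair_sublist_cons]
    by_cases hax : a = x
    · subst hax
      rw [show sub2 a y (a :: l) = decide (y ∈ l) from by simp [sub2], decide_eq_true_eq]
      constructor
      · intro h; exact Or.inl ⟨rfl, h⟩
      · rintro (⟨-, h⟩ | h)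
        · exact h
        · exact h.subset (show y ∈ [a, y] from by simp)
    · simp only [sub2, if_neg hax, ih]
      constructor
      · intro h; exact Or.inr h
      · rintro (⟨h, -⟩ | h)
        · exact absurd h.symm hax
        · exact h

def swapOK : List (Fin 24) → List (Fin 24) → Bool
  | x :: y :: _, u :: v :: _ => u == y && v == x
  | _, _ => false

def swap2 : List (Fin 24) → List (Fin 24)
  | x :: y :: t => y :: x :: t
  | l => l

def blk (n : ℕ) : List (Fin 24) := blocksL.getD n []

theorem blocksL_length : blocksL.length = 96 := rfl

theorem blk_eq (n : ℕ) (h : n < 96) : blk n = blocksL[n]'(by rw [blocksL_length]; exact h) := by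
  have h' : n < blocksL.length := by rw [blocksL_length]; exact h
  simp [blk, List.getD_eq_getElem?_getD, List.getElem?_eq_getElem h']

theorem blk_mem (n : ℕ) (h : n < 96) : blk n ∈ blocksL := by
  rw [blk_eq n h]; exact List.getElem_mem _

theorem bnodup : blocksL.Nodup := by decide

theorem blk_inj (m n : ℕ) (hm : m < 96) (hn : n < 96) (h : blk m = blk n) : m = n := by
  rw [blk_eq m hm, blk_eq n hn] at h
  exact (List.Nodup.getElem_inj_iff bnodup).mp h

theorem blockfacts : ∀ b ∈ blocksL, b.length = 5 ∧ b.Nodup ∧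
    (∀ x ∈ b, ∀ y ∈ b, x.val % 6 = y.val % 6 → x = y) := by decide

theorem lamcore : ∀ x y : Fin 24, x.val % 6 ≠ y.val % 6 →
    blocksL.countP (sub2 x y) = 2 := by decide

theorem sscore : ∀ b₁ ∈ blocksL, ∀ b₂ ∈ blocksL,
    b₁ = b₂ ∨ (b₁.toFinset ∩ b₂.toFinset).card ≤ 2 := by decide

theorem gsame : ∀ x y : Fin 24, x.val % 6 = y.val % 6 →
    ∃ j : Fin 6, x ∈ gset j ∧ y ∈ gset j := by
  intro x y h
  exact ⟨⟨x.val % 6, by omega⟩, (gset_mem _ _).mpr rfl, (gset_mem _ _).mpr h.symm⟩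

theorem pairOK : ∀ i : Fin 48, swapOK (blk (2 * i.val)) (blk (2 * i.val + 1)) = true := by decide

theorem swapnotin : ∀ b ∈ blocksL, swap2 b ∉ blocksL := by decide

theorem swapOK_shape {b c : List (Fin 24)} (h : swapOK b c = true) :
    ∃ x y t s, b = x :: y :: t ∧ c = y :: x :: s := by
  match b, c with
  | x :: y :: t, u :: v :: s =>
    simp only [swapOK, Bool.and_eq_true, beq_iff_eq] at h
    exact ⟨x, y, t, s, rfl, by rw [h.1, h.2]⟩
  | [], c => simp [swapOK] at h
  | [x], c => simp [swapOK] at h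
  | x :: y :: t, [] => simp [swapOK] at h
  | x :: y :: t, [u] => simp [swapOK] at h

theorem countP_bridge (x y : Fin 24) :
    Multiset.countP (fun b => [x, y].Sublist b) (↑blocksL : Multiset (List (Fin 24)))
      = blocksL.countP (sub2 x y) := by
  rw [Multiset.coe_countP]
  apply List.countP_congr
  intro b _
  constructor
  · intro h
    exact (sub2_iff x y b).mpr (of_decide_eq_true h)
  · intro h
    exact decide_eq_true ((sub2_iff x y b).mp h)

/-! ### The base design is a DGDD -/

theorem dgddB : IsDGDD 24 5 2 Gs (↑blocksL : Multiset (List (Fin 24))) := by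
  refine ⟨?_, ?_, ?_⟩
  · intro x
    have hx6 : x.val % 6 < 6 := by omega
    refine ⟨gset ⟨x.val % 6, hx6⟩, ⟨(gs_mem_iff _).mpr ⟨_, rfl⟩, by rw [gset_mem]⟩, ?_⟩
    rintro g ⟨hg, hxg⟩
    obtain ⟨j, rfl⟩ := (gs_mem_iff g).mp hg
    rw [gset_mem] at hxg
    exact congrArg gset (Fin.ext hxg.symm)
  · intro b hb
    have hb' : b ∈ blocksL := Multiset.mem_coe.mp hb
    obtain ⟨h1, h2, h3⟩ := blockfacts b hb'
    refine ⟨h1, h2, ?_⟩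
    intro g hg x hx y hy hxg hyg
    obtain ⟨j, rfl⟩ := (gs_mem_iff g).mp hg
    rw [gset_mem] at hxg hyg
    exact h3 x hx y hy (hxg.trans hyg.symm)
  · intro x y hxy
    rw [countP_bridge]
    apply lamcore
    intro h
    obtain ⟨j, hxj, hyj⟩ := gsame x y h
    exact hxy (gset j) ((gs_mem_iff _).mpr ⟨j, rfl⟩) ⟨hxj, hyj⟩

/-! ### Super-simplicity -/

theorem ssB : SuperSimple 24 (↑blocksL : Multiset (List (Fin 24))) := by
  intro b₁ b₂ hle
  by_cases h : b₁ = b₂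
  · exfalso
    subst h
    have h2 : Multiset.count b₁ ({b₁, b₁} : Multiset (List (Fin 24))) = 2 := by
      simp
    have hle' := Multiset.le_iff_count.mp hle b₁
    rw [h2] at hle'
    have hnd : (↑blocksL : Multiset (List (Fin 24))).Nodup := Multiset.coe_nodup.mpr bnodup
    have := Multiset.nodup_iff_count_le_one.mp hnd b₁
    omega
  · have h1 : b₁ ∈ (↑blocksL : Multiset (List (Fin 24))) :=
      Multiset.mem_of_le hle (by simp)
    have h2 : b₂ ∈ (↑blocksL : Multiset (List (Fin 24))) :=
      Multiset.mem_of_le hle (by simp)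
    rcases sscore b₁ (Multiset.mem_coe.mp h1) b₂ (Multiset.mem_coe.mp h2) with h' | h'
    · exact absurd h' h
    · exact h'

/-! ### Swapping a trade preserves the DGDD property -/

theorem nodup_swap {x y : Fin 24} {t : List (Fin 24)} (h : (x :: y :: t).Nodup) :
    (y :: x :: t).Nodup := by
  simp only [List.nodup_cons, List.mem_cons, not_or] at h ⊢
  obtain ⟨⟨hxy, hxt⟩, hyt, ht⟩ := h
  exact ⟨⟨fun e => hxy e.symm, hyt⟩, ⟨hxt, ht⟩⟩

theorem isDGDD_swap {k lam : ℕ} {G : Finset (Finset (Fin 24))} {x y : Fin 24}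
    {t s : List (Fin 24)} {R : Multiset (List (Fin 24))}
    (h : IsDGDD 24 k lam G ((x :: y :: t) ::ₘ (y :: x :: s) ::ₘ R)) :
    IsDGDD 24 k lam G ((y :: x :: t) ::ₘ (x :: y :: s) ::ₘ R) := by
  obtain ⟨h1, h2, h3⟩ := h
  have hb := h2 _ (Multiset.mem_cons_self _ _)
  have hc := h2 _ (Multiset.mem_cons_of_mem (Multiset.mem_cons_self _ _))
  refine ⟨h1, ?_, ?_⟩
  · intro b hbm
    rcases Multiset.mem_cons.mp hbm with rfl | hbm
    · refine ⟨by simpa using hb.1, nodup_swap hb.2.1, ?_⟩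
      intro g hg a ha c hcc hag hcg
      refine hb.2.2 g hg a ?_ c ?_ hag hcg
      · simp only [List.mem_cons] at ha ⊢; tauto
      · simp only [List.mem_cons] at hcc ⊢; tauto
    rcases Multiset.mem_cons.mp hbm with rfl | hbm
    · refine ⟨by simpa using hc.1, nodup_swap hc.2.1, ?_⟩
      intro g hg a ha c hcc hag hcg
      refine hc.2.2 g hg a ?_ c ?_ hag hcg
      · simp only [List.mem_cons] at ha ⊢; tauto
      · simp only [List.mem_cons] at hcc ⊢; tauto
    · exact h2 b (Multiset.mem_cons_of_mem (Multiset.mem_cons_of_mem hbm))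
  · intro p q hpq
    have hco := h3 p q hpq
    have sw := swap_count x y p q t s hb.2.1 hc.2.1
    rw [Multiset.countP_cons, Multiset.countP_cons] at hco ⊢
    by_cases A : [p,q].Sublist (x :: y :: t) <;>
      by_cases B : [p,q].Sublist (y :: x :: s) <;>
      by_cases C : [p,q].Sublist (y :: x :: t) <;>
      by_cases D : [p,q].Sublist (x :: y :: s) <;>
      simp only [A, B, C, D, if_true, if_false] at sw hco ⊢ <;>
      omega

/-! ### The defining-set lower bound -/

theorem halfB : DGDDDefiningSetsAtLeastHalf 24 5 2 Gs (↑blocksL : Multiset (List (Fin 24))) := by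
  rintro S ⟨hSB, huniq⟩
  by_contra hcon
  push_neg at hcon
  have hcard : Multiset.card (↑blocksL : Multiset (List (Fin 24))) = 96 := rfl
  rw [hcard] at hcon
  have hScard : Multiset.card S ≤ 47 := by omega
  have hexists : ∃ i : Fin 48, blk (2 * i.val) ∉ S ∧ blk (2 * i.val + 1) ∉ S := by
    by_contra hall
    push_neg at hall
    set f : Fin 48 → List (Fin 24) :=
      fun i => if blk (2 * i.val) ∈ S then blk (2 * i.val) else blk (2 * i.val + 1) with hf
    have hfe : ∀ a : Fin 48, ∃ e : ℕ, e ≤ 1 ∧ f a = blk (2 * a.val + e) := by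
      intro a
      by_cases hm : blk (2 * a.val) ∈ S
      · exact ⟨0, by omega, by simp [hf, hm]⟩
      · exact ⟨1, by omega, by simp [hf, hm]⟩
    have hfS : ∀ a : Fin 48, f a ∈ S.toFinset := by
      intro a
      rw [Multiset.mem_toFinset]
      by_cases hm : blk (2 * a.val) ∈ S
      · simpa [hf, hm] using hm
      · simpa [hf, hm] using hall a hm
    have hinj : Set.InjOn f ↑(Finset.univ : Finset (Fin 48)) := by
      intro i _ j _ hij
      obtain ⟨e1, he1, hfe1⟩ := hfe i
      obtain ⟨e2, he2, hfe2⟩ := hfe j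
      rw [hfe1, hfe2] at hij
      have hi48 := i.isLt
      have hj48 := j.isLt
      have := blk_inj (2 * i.val + e1) (2 * j.val + e2) (by omega) (by omega) hij
      exact Fin.ext (by omega)
    have h48 : (Finset.univ : Finset (Fin 48)).card ≤ S.toFinset.card :=
      Finset.card_le_card_of_injOn f (fun a _ => hfS a) hinj
    have hle : S.toFinset.card ≤ Multiset.card S := Multiset.toFinset_card_le S
    rw [Finset.card_univ, Fintype.card_fin] at h48
    omega
  obtain ⟨i, hbS, hcS⟩ := hexists
  have hi48 := i.isLt
  have hi2 : 2 * i.val < 96 := by omega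
  have hi21 : 2 * i.val + 1 < 96 := by omega
  obtain ⟨x, y, t, s, hbdef, hcdef⟩ := swapOK_shape (pairOK i)
  have hbmem : blk (2 * i.val) ∈ blocksL := blk_mem _ hi2
  have hcmem : blk (2 * i.val + 1) ∈ blocksL := blk_mem _ hi21
  have hbc : blk (2 * i.val) ≠ blk (2 * i.val + 1) := by
    intro he
    have := blk_inj _ _ hi2 hi21 he
    omega
  have hbB : blk (2 * i.val) ∈ (↑blocksL : Multiset (List (Fin 24))) :=
    Multiset.mem_coe.mpr hbmem
  have hcB : blk (2 * i.val + 1) ∈ (↑blocksL : Multiset (List (Fin 24))) :=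
    Multiset.mem_coe.mpr hcmem
  have hcB' : blk (2 * i.val + 1) ∈ (↑blocksL : Multiset (List (Fin 24))).erase (blk (2 * i.val)) :=
    (Multiset.mem_erase_of_ne (Ne.symm hbc)).mpr hcB
  set R : Multiset (List (Fin 24)) :=
    ((↑blocksL : Multiset (List (Fin 24))).erase (blk (2 * i.val))).erase (blk (2 * i.val + 1))
    with hR
  have hdecomp : (↑blocksL : Multiset (List (Fin 24)))
      = blk (2 * i.val) ::ₘ blk (2 * i.val + 1) ::ₘ R := by
    rw [hR, Multiset.cons_erase hcB', Multiset.cons_erase hbB]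
  have hSR : S ≤ R := by
    rw [Multiset.le_iff_count]
    intro a
    have hcount := Multiset.le_iff_count.mp hSB a
    rw [hdecomp] at hcount
    by_cases hab : a = blk (2 * i.val)
    · subst hab
      rw [Multiset.count_eq_zero.mpr hbS]
      exact Nat.zero_le _
    · by_cases hac : a = blk (2 * i.val + 1)
      · subst hac
        rw [Multiset.count_eq_zero.mpr hcS]
        exact Nat.zero_le _
      · rwa [Multiset.count_cons_of_ne hab, Multiset.count_cons_of_ne hac] at hcount
  have hdgddB' : IsDGDD 24 5 2 Gs ((y :: x :: t) ::ₘ (x :: y :: s) ::ₘ R) := by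
    apply isDGDD_swap
    rw [← hbdef, ← hcdef, ← hdecomp]
    exact dgddB
  have hSB' : S ≤ (y :: x :: t) ::ₘ (x :: y :: s) ::ₘ R :=
    le_trans hSR (le_trans (Multiset.le_cons_self _ _) (Multiset.le_cons_self _ _))
  have heq := huniq _ hdgddB' hSB'
  have hmem' : (y :: x :: t) ∈ ((y :: x :: t) ::ₘ (x :: y :: s) ::ₘ R) :=
    Multiset.mem_cons_self _ _
  rw [heq] at hmem'
  have hmem'' : (y :: x :: t) ∈ blocksL := Multiset.mem_coe.mp hmem'
  have hno := swapnotin _ hbmem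
  rw [hbdef] at hno
  exact hno hmem''

/-- There exists a super-simple `(5,2)`-DGDD of group type `4⁶`
(six groups each of size `4`) with `d ≥ 1/2`. -/
theorem exists_superSimple_DGDD_type_4_6 :
    ExistsSuperSimpleDGDDHalf 5 2 (Multiset.replicate 6 4) := by
  exact ⟨24, Gs, ↑blocksL, dgddB, ssB, gcard, halfB⟩
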